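/- There is a bijection between (isomorphism classes of) XY-graphs on n vertices with no isolates in Y and (isomorphism classes of) minimal set covers of an n-element set, obtained by mapping each x ∈ X to the set {x} ∪ N(x); under this bijection, X contains a universal vertex if and only if the cover contains a set of size |V| − |C| + 1. -/

import Mathlib

open SimpleGraph
attribute [local instance] Classical.propDecidable

/-- An XY-graph on `Fin n`: a bipartite graph with a specified bipartition, whose
distinguished part is `X` (the other part `Y` being the complement of `X`). -/
structure XYGraph (n : ℕ) where
  G : SimpleGraph (Fin n)
  X : Finset (Fin n)
  bip : ∀ u v : Fin n, G.Adj u v → (u ∈ X ∧ v ∉ X) ∨ (u ∉ X ∧ v ∈ X)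

/-- No vertex of `Y` (the complement of `X`) is isolated. -/
def NoIsolateY {n : ℕ} (A : XYGraph n) : Prop :=
  ∀ v : Fin n, v ∉ A.X → ∃ u ∈ A.X, A.G.Adj u v

/-- `X` contains a universal vertex: one adjacent to every vertex of `Y`. -/
def HasUniversalX {n : ℕ} (A : XYGraph n) : Prop :=
  ∃ x ∈ A.X, ∀ y : Fin n, y ∉ A.X → A.G.Adj x y

/-- `C` is a set cover of the finite type `V`: the union of its members is all of `V`. -/
def IsSetCover {V : Type*} [Fintype V] (C : Finset (Finset V)) : Prop :=
  ∀ v : V, ∃ A ∈ C, v ∈ A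

/-- A set cover is minimal if no member is contained in the union of the remaining members. -/
def IsMinimalCover {V : Type*} [DecidableEq V] (C : Finset (Finset V)) : Prop :=
  ∀ A ∈ C, ¬ A ⊆ (C.erase A).sup id

/-- A vertex is loyal if it belongs to exactly one member of `C`. -/
def Loyal {V : Type*} (C : Finset (Finset V)) (v : V) : Prop :=
  ∃! A : Finset V, A ∈ C ∧ v ∈ A

/-- Isomorphism of XY-graphs with no isolates in `Y`. -/
def XYnRel (n : ℕ) (A B : {A : XYGraph n // NoIsolateY A}) : Prop :=
  ∃ e : A.1.G ≃g B.1.G, ∀ v : Fin n, v ∈ A.1.X ↔ e v ∈ B.1.X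

/-- Isomorphism of minimal set covers on `Fin n`. -/
def CoverIsoRel (n : ℕ)
    (C D : {C : Finset (Finset (Fin n)) // IsSetCover C ∧ IsMinimalCover C}) : Prop :=
  ∃ σ : Equiv.Perm (Fin n), C.1.image (fun A => A.image σ) = D.1

-- ### auxiliary development

variable {n : ℕ}

noncomputable def nbhd (A : XYGraph n) (x : Fin n) : Finset (Fin n) :=
  Finset.univ.filter fun y => A.G.Adj x y

noncomputable def sx (A : XYGraph n) (x : Fin n) : Finset (Fin n) := insert x (nbhd A x)

noncomputable def coverOf (A : XYGraph n) : Finset (Finset (Fin n)) := A.X.image (sx A)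

lemma mem_nbhd {A : XYGraph n} {x y : Fin n} : y ∈ nbhd A x ↔ A.G.Adj x y := by
  simp [nbhd]

lemma nbhd_subset {A : XYGraph n} {x : Fin n} (hx : x ∈ A.X) :
    ∀ y ∈ nbhd A x, y ∉ A.X := by
  intro y hy
  rcases A.bip x y (mem_nbhd.1 hy) with ⟨_, h⟩ | ⟨h, _⟩
  · exact h
  · exact absurd hx h

lemma mem_sx_X {A : XYGraph n} {x x' : Fin n} (hx : x ∈ A.X) (hx' : x' ∈ A.X)
    (h : x' ∈ sx A x) : x' = x := by
  rcases Finset.mem_insert.1 h with h | h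
  · exact h
  · exact absurd hx' (nbhd_subset hx x' h)

lemma sx_injOn (A : XYGraph n) : Set.InjOn (sx A) A.X := by
  intro x hx x' hx' h
  have : x ∈ sx A x' := h ▸ Finset.mem_insert_self x _
  exact mem_sx_X hx' hx this

lemma coverOf_isCover {A : XYGraph n} (hA : NoIsolateY A) : IsSetCover (coverOf A) := by
  intro v
  by_cases hv : v ∈ A.X
  · exact ⟨sx A v, Finset.mem_image_of_mem _ hv, Finset.mem_insert_self _ _⟩
  · obtain ⟨u, hu, huv⟩ := hA v hv
    exact ⟨sx A u, Finset.mem_image_of_mem _ hu,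
      Finset.mem_insert_of_mem (mem_nbhd.2 huv)⟩

lemma coverOf_minimal (A : XYGraph n) : IsMinimalCover (coverOf A) := by
  intro S hS hsub
  obtain ⟨x, hx, rfl⟩ := Finset.mem_image.1 hS
  have hxS : x ∈ (((coverOf A).erase (sx A x)).sup id) := hsub (Finset.mem_insert_self _ _)
  obtain ⟨B, hB, hxB⟩ := Finset.mem_sup.1 hxS
  obtain ⟨hBne, hBmem⟩ := Finset.mem_erase.1 hB
  obtain ⟨x', hx', rfl⟩ := Finset.mem_image.1 hBmem
  exact hBne (by rw [mem_sx_X hx' hx hxB])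

lemma card_coverOf (A : XYGraph n) : (coverOf A).card = A.X.card :=
  Finset.card_image_of_injOn (sx_injOn A)

lemma card_sx {A : XYGraph n} (x : Fin n) : (sx A x).card = (nbhd A x).card + 1 := by
  rw [sx, Finset.card_insert_of_notMem]
  simp [mem_nbhd]

lemma universal_iff (A : XYGraph n) :
    HasUniversalX A ↔ ∃ Y ∈ coverOf A, (Y.card : ℤ) = (n : ℤ) - (coverOf A).card + 1 := by
  have hcompl : ∀ x : Fin n, (A.Xᶜ).card = n - A.X.card := by
    intro x; simp [Finset.card_compl]
  constructor
  · rintro ⟨x, hx, hxu⟩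
    refine ⟨sx A x, Finset.mem_image_of_mem _ hx, ?_⟩
    have h1 : nbhd A x = A.Xᶜ := by
      apply Finset.Subset.antisymm
      · intro y hy; simpa using nbhd_subset hx y hy
      · intro y hy; exact mem_nbhd.2 (hxu y (by simpa using hy))
    have h2 : (sx A x).card = n - A.X.card + 1 := by
      rw [card_sx, h1, Finset.card_compl]; simp
    have hle : A.X.card ≤ n := by
      simpa using Finset.card_le_card (Finset.subset_univ A.X)
    rw [card_coverOf, h2]
    push_cast [Nat.cast_sub hle]
    ring
  · rintro ⟨Y, hY, hcard⟩
    obtain ⟨x, hx, rfl⟩ := Finset.mem_image.1 hY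
    refine ⟨x, hx, ?_⟩
    have hsub : nbhd A x ⊆ A.Xᶜ := by
      intro y hy; simpa using nbhd_subset hx y hy
    have hle : A.X.card ≤ n := by
      simpa using Finset.card_le_card (Finset.subset_univ A.X)
    have hcard' : ((nbhd A x).card : ℤ) = (A.Xᶜ).card := by
      rw [Finset.card_compl, Fintype.card_fin]
      have := hcard
      rw [card_sx, card_coverOf] at this
      push_cast [Nat.cast_sub hle] at this ⊢
      linarith
    have heq : nbhd A x = A.Xᶜ :=
      Finset.eq_of_subset_of_card_le hsub (by exact_mod_cast hcard'.ge)
    intro y hy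
    have : y ∈ nbhd A x := heq ▸ (by simpa using hy)
    exact mem_nbhd.1 this

/-! ### From covers to graphs -/

/-- `X` is a system of loyal representatives for `C`. -/
def RepSet (C : Finset (Finset (Fin n))) (X : Finset (Fin n)) : Prop :=
  (∀ x ∈ X, ∀ A ∈ C, ∀ B ∈ C, x ∈ A → x ∈ B → A = B) ∧
  (∀ A ∈ C, ∃! x, x ∈ X ∧ x ∈ A)

noncomputable def graphOf (C : Finset (Finset (Fin n))) (X : Finset (Fin n)) : XYGraph n where
  G := { Adj := fun u v => u ≠ v ∧ (∃ A ∈ C, u ∈ A ∧ v ∈ A) ∧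
           ((u ∈ X ∧ v ∉ X) ∨ (v ∈ X ∧ u ∉ X))
         symm := ⟨by
           rintro u v ⟨h1, ⟨A, hA, hu, hv⟩, h3⟩
           exact ⟨h1.symm, ⟨A, hA, hv, hu⟩, h3.symm⟩⟩
         loopless := ⟨fun v h => h.1 rfl⟩ }
  X := X
  bip := fun u v h => h.2.2.imp id (fun h => ⟨h.2, h.1⟩)

lemma graphOf_adj {C : Finset (Finset (Fin n))} {X : Finset (Fin n)} {u v : Fin n} :
    (graphOf C X).G.Adj u v ↔ u ≠ v ∧ (∃ A ∈ C, u ∈ A ∧ v ∈ A) ∧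
      ((u ∈ X ∧ v ∉ X) ∨ (v ∈ X ∧ u ∉ X)) := Iff.rfl

lemma exists_loyal_mem {C : Finset (Finset (Fin n))} (hc : IsMinimalCover C)
    {A : Finset (Fin n)} (hA : A ∈ C) : ∃ v, v ∈ A ∧ ∀ B ∈ C, v ∈ B → B = A := by
  by_contra h
  push_neg at h
  apply hc A hA
  intro v hv
  obtain ⟨B, hB, hvB, hne⟩ := h v hv
  exact Finset.mem_sup.2 ⟨B, Finset.mem_erase.2 ⟨hne, hB⟩, hvB⟩

lemma exists_repSet {C : Finset (Finset (Fin n))} (hc : IsMinimalCover C) :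
    ∃ X, RepSet C X := by
  have h : ∀ A : {A // A ∈ C}, ∃ v, v ∈ A.1 ∧ ∀ B ∈ C, v ∈ B → B = A.1 :=
    fun A => exists_loyal_mem hc A.2
  choose f hf1 hf2 using h
  refine ⟨C.attach.image f, ?_, ?_⟩
  · intro x hx A hA B hB hxA hxB
    obtain ⟨S, _, rfl⟩ := Finset.mem_image.1 hx
    rw [hf2 S A hA hxA, hf2 S B hB hxB]
  · intro A hA
    refine ⟨f ⟨A, hA⟩, ⟨Finset.mem_image_of_mem _ (Finset.mem_attach _ _), hf1 _⟩, ?_⟩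
    rintro y ⟨hy, hyA⟩
    obtain ⟨S, _, rfl⟩ := Finset.mem_image.1 hy
    have : A = S.1 := hf2 S A hA hyA
    subst this
    rfl

lemma graphOf_noIsolate {C : Finset (Finset (Fin n))} {X : Finset (Fin n)}
    (hcov : IsSetCover C) (hrep : RepSet C X) : NoIsolateY (graphOf C X) := by
  intro v hv
  obtain ⟨A, hA, hvA⟩ := hcov v
  obtain ⟨x, ⟨hxX, hxA⟩, _⟩ := hrep.2 A hA
  refine ⟨x, hxX, ?_⟩
  exact ⟨fun h => hv (h ▸ hxX), ⟨A, hA, hxA, hvA⟩, Or.inl ⟨hxX, hv⟩⟩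

lemma sx_graphOf {C : Finset (Finset (Fin n))} {X : Finset (Fin n)}
    (hrep : RepSet C X) {x : Fin n} (hx : x ∈ X)
    {A : Finset (Fin n)} (hA : A ∈ C) (hxA : x ∈ A) :
    sx (graphOf C X) x = A := by
  apply Finset.Subset.antisymm
  · intro y hy
    rcases Finset.mem_insert.1 hy with rfl | hy
    · exact hxA
    · obtain ⟨_, ⟨B, hB, hxB, hyB⟩, _⟩ := mem_nbhd.1 hy
      exact (hrep.1 x hx B hB A hA hxB hxA) ▸ hyB
  · intro w hw
    by_cases hwx : w = x
    · exact hwx ▸ Finset.mem_insert_self _ _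
    · refine Finset.mem_insert_of_mem (mem_nbhd.2 ?_)
      have hwX : w ∉ X := by
        intro hwX
        obtain ⟨z, hz, hu⟩ := hrep.2 A hA
        exact hwx ((hu w ⟨hwX, hw⟩).trans (hu x ⟨hx, hxA⟩).symm)
      exact ⟨fun h => hwx h.symm, ⟨A, hA, hxA, hw⟩, Or.inl ⟨hx, hwX⟩⟩

lemma coverOf_graphOf {C : Finset (Finset (Fin n))} {X : Finset (Fin n)}
    (hcov : IsSetCover C) (hrep : RepSet C X) : coverOf (graphOf C X) = C := by
  apply Finset.Subset.antisymm
  · intro S hS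
    obtain ⟨x, hx, rfl⟩ := Finset.mem_image.1 hS
    obtain ⟨A, hA, hxA⟩ := hcov x
    exact (sx_graphOf hrep hx hA hxA) ▸ hA
  · intro A hA
    obtain ⟨x, ⟨hxX, hxA⟩, _⟩ := hrep.2 A hA
    exact Finset.mem_image.2 ⟨x, hxX, sx_graphOf hrep hxX hA hxA⟩

lemma repSet_coverOf (A : XYGraph n) : RepSet (coverOf A) A.X := by
  constructor
  · intro x hx S1 hS1 S2 hS2 h1 h2
    obtain ⟨x1, hx1, rfl⟩ := Finset.mem_image.1 hS1
    obtain ⟨x2, hx2, rfl⟩ := Finset.mem_image.1 hS2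
    rw [← mem_sx_X hx1 hx h1, ← mem_sx_X hx2 hx h2]
  · intro S hS
    obtain ⟨x, hx, rfl⟩ := Finset.mem_image.1 hS
    exact ⟨x, ⟨hx, Finset.mem_insert_self _ _⟩, fun y ⟨hy, hyS⟩ => mem_sx_X hx hy hyS⟩

lemma XYGraph.ext' {A B : XYGraph n} (hG : A.G = B.G) (hX : A.X = B.X) : A = B := by
  cases A; cases B; cases hG; cases hX; rfl

lemma graphOf_coverOf (A : XYGraph n) : graphOf (coverOf A) A.X = A := by
  refine XYGraph.ext' ?_ rfl
  ext u v
  rw [graphOf_adj]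
  constructor
  · rintro ⟨hne, ⟨S, hS, huS, hvS⟩, h⟩
    obtain ⟨x, hx, rfl⟩ := Finset.mem_image.1 hS
    rcases h with ⟨hu, hv⟩ | ⟨hv, hu⟩
    · have : u = x := mem_sx_X hx hu huS
      subst this
      rcases Finset.mem_insert.1 hvS with rfl | hvn
      · exact absurd rfl hne
      · exact mem_nbhd.1 hvn
    · have : v = x := mem_sx_X hx hv hvS
      subst this
      rcases Finset.mem_insert.1 huS with rfl | hun
      · exact absurd rfl hne
      · exact (mem_nbhd.1 hun).symm
  · intro h
    refine ⟨A.G.ne_of_adj h, ?_, ?_⟩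
    · rcases A.bip u v h with ⟨hu, _⟩ | ⟨_, hv⟩
      · exact ⟨sx A u, Finset.mem_image_of_mem _ hu, Finset.mem_insert_self _ _,
          Finset.mem_insert_of_mem (mem_nbhd.2 h)⟩
      · exact ⟨sx A v, Finset.mem_image_of_mem _ hv,
          Finset.mem_insert_of_mem (mem_nbhd.2 h.symm), Finset.mem_insert_self _ _⟩
    · exact (A.bip u v h).imp id (fun h => ⟨h.2, h.1⟩)

/-! ### Changing the representative set -/

def SwapSpec (C : Finset (Finset (Fin n))) (X₁ X₂ : Finset (Fin n)) (v w : Fin n) : Prop :=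
  (∃ A ∈ C, v ∈ A ∧ w ∈ A) ∧
  ((v ∈ X₁ ∧ v ∉ X₂ ∧ w ∈ X₂ ∧ w ∉ X₁) ∨ (v ∈ X₂ ∧ v ∉ X₁ ∧ w ∈ X₁ ∧ w ∉ X₂))

lemma swapSpec_symm {C : Finset (Finset (Fin n))} {X₁ X₂ : Finset (Fin n)} {v w : Fin n}
    (h : SwapSpec C X₁ X₂ v w) : SwapSpec C X₁ X₂ w v := by
  obtain ⟨⟨A, hA, hv, hw⟩, hor⟩ := h
  refine ⟨⟨A, hA, hw, hv⟩, ?_⟩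
  rcases hor with ⟨a, b, c, d⟩ | ⟨a, b, c, d⟩
  · exact Or.inr ⟨c, d, a, b⟩
  · exact Or.inl ⟨c, d, a, b⟩

lemma swapSpec_unique {C : Finset (Finset (Fin n))} {X₁ X₂ : Finset (Fin n)}
    (hr₁ : RepSet C X₁) (hr₂ : RepSet C X₂) {v w w' : Fin n}
    (h : SwapSpec C X₁ X₂ v w) (h' : SwapSpec C X₁ X₂ v w') : w = w' := by
  obtain ⟨⟨A, hA, hvA, hwA⟩, hor⟩ := h
  obtain ⟨⟨A', hA', hvA', hwA'⟩, hor'⟩ := h'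
  rcases hor with ⟨a, b, c, d⟩ | ⟨a, b, c, d⟩ <;>
    rcases hor' with ⟨a', b', c', d'⟩ | ⟨a', b', c', d'⟩
  · have hAA : A = A' := hr₁.1 v a A hA A' hA' hvA hvA'
    obtain ⟨z, hz, hu⟩ := hr₂.2 A hA
    exact (hu w ⟨c, hwA⟩).trans (hu w' ⟨c', hAA ▸ hwA'⟩).symm
  · exact absurd a' b
  · exact absurd a b'
  · have hAA : A = A' := hr₂.1 v a A hA A' hA' hvA hvA'
    obtain ⟨z, hz, hu⟩ := hr₁.2 A hA
    exact (hu w ⟨c, hwA⟩).trans (hu w' ⟨c', hAA ▸ hwA'⟩).symm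

noncomputable def swapFun (C : Finset (Finset (Fin n))) (X₁ X₂ : Finset (Fin n))
    (v : Fin n) : Fin n :=
  if h : ∃ w, SwapSpec C X₁ X₂ v w then h.choose else v

lemma swapFun_spec {C : Finset (Finset (Fin n))} {X₁ X₂ : Finset (Fin n)} {v : Fin n}
    (h : ∃ w, SwapSpec C X₁ X₂ v w) : SwapSpec C X₁ X₂ v (swapFun C X₁ X₂ v) := by
  rw [swapFun, dif_pos h]
  exact h.choose_spec

lemma swapFun_of_not {C : Finset (Finset (Fin n))} {X₁ X₂ : Finset (Fin n)} {v : Fin n}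
    (h : ¬ ∃ w, SwapSpec C X₁ X₂ v w) : swapFun C X₁ X₂ v = v := by
  rw [swapFun, dif_neg h]

lemma swapFun_involutive {C : Finset (Finset (Fin n))} {X₁ X₂ : Finset (Fin n)}
    (hr₁ : RepSet C X₁) (hr₂ : RepSet C X₂) :
    Function.Involutive (swapFun C X₁ X₂) := by
  intro v
  by_cases h : ∃ w, SwapSpec C X₁ X₂ v w
  · have h1 := swapFun_spec h
    have h2 : ∃ w, SwapSpec C X₁ X₂ (swapFun C X₁ X₂ v) w := ⟨v, swapSpec_symm h1⟩
    exact swapSpec_unique hr₁ hr₂ (swapFun_spec h2) (swapSpec_symm h1)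
  · rw [swapFun_of_not h, swapFun_of_not h]

lemma swapFun_memX {C : Finset (Finset (Fin n))} {X₁ X₂ : Finset (Fin n)}
    (hcov : IsSetCover C) (hr₁ : RepSet C X₁) (hr₂ : RepSet C X₂) (v : Fin n) :
    v ∈ X₁ ↔ swapFun C X₁ X₂ v ∈ X₂ := by
  by_cases h : ∃ w, SwapSpec C X₁ X₂ v w
  · obtain ⟨_, hor⟩ := swapFun_spec h
    rcases hor with ⟨a, b, c, d⟩ | ⟨a, b, c, d⟩
    · exact ⟨fun _ => c, fun _ => a⟩
    · exact ⟨fun hv => absurd hv b, fun hw => absurd hw d⟩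
  · rw [swapFun_of_not h]
    constructor
    · intro h1
      by_contra h2
      obtain ⟨A, hA, hvA⟩ := hcov v
      obtain ⟨x, ⟨hxX, hxA⟩, _⟩ := hr₂.2 A hA
      have hxX1 : x ∉ X₁ := by
        intro hx1
        obtain ⟨z, hz, hu⟩ := hr₁.2 A hA
        exact h2 (((hu v ⟨h1, hvA⟩).trans (hu x ⟨hx1, hxA⟩).symm) ▸ hxX)
      exact h ⟨x, ⟨A, hA, hvA, hxA⟩, Or.inl ⟨h1, h2, hxX, hxX1⟩⟩
    · intro h1
      by_contra h2
      obtain ⟨A, hA, hvA⟩ := hcov v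
      obtain ⟨x, ⟨hxX, hxA⟩, _⟩ := hr₁.2 A hA
      have hxX2 : x ∉ X₂ := by
        intro hx2
        obtain ⟨z, hz, hu⟩ := hr₂.2 A hA
        exact h2 (((hu v ⟨h1, hvA⟩).trans (hu x ⟨hx2, hxA⟩).symm) ▸ hxX)
      exact h ⟨x, ⟨A, hA, hvA, hxA⟩, Or.inr ⟨h1, h2, hxX, hxX2⟩⟩

lemma swapFun_memA {C : Finset (Finset (Fin n))} {X₁ X₂ : Finset (Fin n)}
    (hr₁ : RepSet C X₁) (hr₂ : RepSet C X₂) (v : Fin n)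
    {A : Finset (Fin n)} (hA : A ∈ C) : v ∈ A ↔ swapFun C X₁ X₂ v ∈ A := by
  by_cases h : ∃ w, SwapSpec C X₁ X₂ v w
  · obtain ⟨⟨A₀, hA₀, hvA₀, hwA₀⟩, hor⟩ := swapFun_spec h
    have hv : v ∈ A ↔ A = A₀ := by
      constructor
      · intro hvA
        rcases hor with ⟨a, _⟩ | ⟨a, _⟩
        · exact hr₁.1 v a A hA A₀ hA₀ hvA hvA₀
        · exact hr₂.1 v a A hA A₀ hA₀ hvA hvA₀
      · rintro rfl; exact hvA₀
    have hw : swapFun C X₁ X₂ v ∈ A ↔ A = A₀ := by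
      constructor
      · intro hwA
        rcases hor with ⟨_, _, c, _⟩ | ⟨_, _, c, _⟩
        · exact hr₂.1 _ c A hA A₀ hA₀ hwA hwA₀
        · exact hr₁.1 _ c A hA A₀ hA₀ hwA hwA₀
      · rintro rfl; exact hwA₀
    rw [hv, hw]
  · rw [swapFun_of_not h]

lemma xyn_repSwap {C : Finset (Finset (Fin n))} {X₁ X₂ : Finset (Fin n)}
    (hcov : IsSetCover C) (hr₁ : RepSet C X₁) (hr₂ : RepSet C X₂)
    (h₁ : NoIsolateY (graphOf C X₁)) (h₂ : NoIsolateY (graphOf C X₂)) :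
    XYnRel n ⟨graphOf C X₁, h₁⟩ ⟨graphOf C X₂, h₂⟩ := by
  set σ : Equiv.Perm (Fin n) := (swapFun_involutive hr₁ hr₂).toPerm with hσdef
  have hσ : ∀ v, σ v = swapFun C X₁ X₂ v := fun v => rfl
  have hmemX : ∀ v, v ∈ X₁ ↔ σ v ∈ X₂ := fun v => by
    rw [hσ]; exact swapFun_memX hcov hr₁ hr₂ v
  have hmemA : ∀ v, ∀ A ∈ C, (v ∈ A ↔ σ v ∈ A) := fun v A hA => by
    rw [hσ]; exact swapFun_memA hr₁ hr₂ v hA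
  refine ⟨⟨σ, ?_⟩, fun v => hmemX v⟩
  intro a b
  show (graphOf C X₂).G.Adj (σ a) (σ b) ↔ (graphOf C X₁).G.Adj a b
  rw [graphOf_adj, graphOf_adj]
  constructor
  · rintro ⟨hne, ⟨A, hA, ha, hb⟩, hor⟩
    refine ⟨fun hab => hne (hab ▸ rfl), ⟨A, hA, (hmemA a A hA).2 ha, (hmemA b A hA).2 hb⟩, ?_⟩
    rcases hor with ⟨x, y⟩ | ⟨x, y⟩
    · exact Or.inl ⟨(hmemX a).2 x, fun hb1 => y ((hmemX b).1 hb1)⟩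
    · exact Or.inr ⟨(hmemX b).2 x, fun ha1 => y ((hmemX a).1 ha1)⟩
  · rintro ⟨hne, ⟨A, hA, ha, hb⟩, hor⟩
    refine ⟨fun hab => hne (σ.injective hab), ⟨A, hA, (hmemA a A hA).1 ha, (hmemA b A hA).1 hb⟩, ?_⟩
    rcases hor with ⟨x, y⟩ | ⟨x, y⟩
    · exact Or.inl ⟨(hmemX a).1 x, fun hb2 => y ((hmemX b).2 hb2)⟩
    · exact Or.inr ⟨(hmemX b).1 x, fun ha2 => y ((hmemX a).2 ha2)⟩

/-! ### Transport along permutations -/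

lemma mem_image_perm {σ : Equiv.Perm (Fin n)} {A : Finset (Fin n)} {y : Fin n} :
    y ∈ A.image σ ↔ σ.symm y ∈ A := by
  constructor
  · rintro h
    obtain ⟨a, ha, rfl⟩ := Finset.mem_image.1 h
    simpa using ha
  · intro h
    exact Finset.mem_image.2 ⟨σ.symm y, h, by simp⟩

lemma mem_image_perm' {σ : Equiv.Perm (Fin n)} {A : Finset (Fin n)} {y : Fin n} :
    σ y ∈ A.image σ ↔ y ∈ A := by
  rw [mem_image_perm]; simp

lemma mapCover {A B : {A : XYGraph n // NoIsolateY A}} (e : A.1.G ≃g B.1.G)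
    (he : ∀ v : Fin n, v ∈ A.1.X ↔ e v ∈ B.1.X) :
    (coverOf A.1).image (fun S => S.image e.toEquiv) = coverOf B.1 := by
  have hX : B.1.X = A.1.X.image e.toEquiv := by
    apply Finset.Subset.antisymm
    · intro y hy
      refine Finset.mem_image.2 ⟨e.toEquiv.symm y, ?_, by simp⟩
      rw [he, show e (e.toEquiv.symm y) = y from e.toEquiv.apply_symm_apply y]
      exact hy
    · intro y hy
      obtain ⟨x, hx, rfl⟩ := Finset.mem_image.1 hy
      exact (he x).1 hx
  have hsx : ∀ x : Fin n, (sx A.1 x).image e.toEquiv = sx B.1 (e.toEquiv x) := by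
    intro x
    rw [sx, sx, Finset.image_insert]
    congr 1
    ext y
    rw [mem_image_perm, mem_nbhd, mem_nbhd]
    constructor
    · intro h
      have h2 := e.map_adj_iff.2 h
      rwa [show e (e.toEquiv.symm y) = y from e.toEquiv.apply_symm_apply y] at h2
    · intro h
      rw [← show e (e.toEquiv.symm y) = y from e.toEquiv.apply_symm_apply y] at h
      exact e.map_adj_iff.1 h
  rw [coverOf, coverOf, hX, Finset.image_image, Finset.image_image]
  apply Finset.image_congr
  intro x _
  exact hsx x

lemma repSet_map {C : Finset (Finset (Fin n))} {X : Finset (Fin n)} (σ : Equiv.Perm (Fin n))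
    (hr : RepSet C X) : RepSet (C.image fun A => A.image σ) (X.image σ) := by
  constructor
  · intro x hx A hA B hB hxA hxB
    obtain ⟨A₀, hA₀, rfl⟩ := Finset.mem_image.1 hA
    obtain ⟨B₀, hB₀, rfl⟩ := Finset.mem_image.1 hB
    obtain ⟨x₀, hx₀, rfl⟩ := Finset.mem_image.1 hx
    rw [mem_image_perm'] at hxA hxB
    rw [hr.1 x₀ hx₀ A₀ hA₀ B₀ hB₀ hxA hxB]
  · intro A hA
    obtain ⟨A₀, hA₀, rfl⟩ := Finset.mem_image.1 hA
    obtain ⟨x, ⟨hxX, hxA⟩, hu⟩ := hr.2 A₀ hA₀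
    refine ⟨σ x, ⟨Finset.mem_image_of_mem _ hxX, mem_image_perm'.2 hxA⟩, ?_⟩
    rintro y ⟨hy, hyA⟩
    rw [mem_image_perm] at hy hyA
    have := hu (σ.symm y) ⟨hy, hyA⟩
    rw [← this]; simp

lemma cover_map {C : Finset (Finset (Fin n))} (σ : Equiv.Perm (Fin n))
    (hc : IsSetCover C) : IsSetCover (C.image fun A => A.image σ) := by
  intro v
  obtain ⟨A, hA, hv⟩ := hc (σ.symm v)
  exact ⟨A.image σ, Finset.mem_image_of_mem _ hA, mem_image_perm.2 hv⟩

lemma xyn_graphOf_map {C : Finset (Finset (Fin n))} {X : Finset (Fin n)}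
    (σ : Equiv.Perm (Fin n))
    (h₁ : NoIsolateY (graphOf C X))
    (h₂ : NoIsolateY (graphOf (C.image fun A => A.image σ) (X.image σ))) :
    XYnRel n ⟨graphOf C X, h₁⟩ ⟨graphOf (C.image fun A => A.image σ) (X.image σ), h₂⟩ := by
  refine ⟨⟨σ, ?_⟩, fun v => (mem_image_perm' (σ := σ)).symm⟩
  intro a b
  show (graphOf _ _).G.Adj (σ a) (σ b) ↔ (graphOf C X).G.Adj a b
  rw [graphOf_adj, graphOf_adj]
  constructor
  · rintro ⟨hne, ⟨A, hA, ha, hb⟩, hor⟩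
    obtain ⟨A₀, hA₀, rfl⟩ := Finset.mem_image.1 hA
    rw [mem_image_perm'] at ha hb
    refine ⟨fun h => hne (h ▸ rfl), ⟨A₀, hA₀, ha, hb⟩, ?_⟩
    rcases hor with ⟨x, y⟩ | ⟨x, y⟩
    · exact Or.inl ⟨mem_image_perm'.1 x, fun h => y (mem_image_perm'.2 h)⟩
    · exact Or.inr ⟨mem_image_perm'.1 x, fun h => y (mem_image_perm'.2 h)⟩
  · rintro ⟨hne, ⟨A, hA, ha, hb⟩, hor⟩
    refine ⟨fun h => hne (σ.injective h), ⟨A.image σ, Finset.mem_image_of_mem _ hA,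
      mem_image_perm'.2 ha, mem_image_perm'.2 hb⟩, ?_⟩
    rcases hor with ⟨x, y⟩ | ⟨x, y⟩
    · exact Or.inl ⟨mem_image_perm'.2 x, fun h => y (mem_image_perm'.1 h)⟩
    · exact Or.inr ⟨mem_image_perm'.2 x, fun h => y (mem_image_perm'.1 h)⟩

lemma xyn_trans {A B C : {A : XYGraph n // NoIsolateY A}}
    (h₁ : XYnRel n A B) (h₂ : XYnRel n B C) : XYnRel n A C := by
  obtain ⟨e, he⟩ := h₁
  obtain ⟨f, hf⟩ := h₂
  exact ⟨e.trans f, fun v => (he v).trans (hf (e v))⟩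

/-! ### The equivalence of quotients -/

noncomputable def coverElt (A : {A : XYGraph n // NoIsolateY A}) :
    {C : Finset (Finset (Fin n)) // IsSetCover C ∧ IsMinimalCover C} :=
  ⟨coverOf A.1, coverOf_isCover A.2, coverOf_minimal A.1⟩

noncomputable def graphElt (C : {C : Finset (Finset (Fin n)) // IsSetCover C ∧ IsMinimalCover C}) :
    {A : XYGraph n // NoIsolateY A} :=
  ⟨graphOf C.1 (exists_repSet C.2.2).choose,
    graphOf_noIsolate C.2.1 (exists_repSet C.2.2).choose_spec⟩

noncomputable def Fmap (n : ℕ) : Quot (XYnRel n) → Quot (CoverIsoRel n) :=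
  Quot.lift (fun A => Quot.mk _ (coverElt A)) (by
    rintro A B ⟨e, he⟩
    apply Quot.sound
    exact ⟨e.toEquiv, mapCover e he⟩)

noncomputable def Gmap (n : ℕ) : Quot (CoverIsoRel n) → Quot (XYnRel n) :=
  Quot.lift (fun C => Quot.mk _ (graphElt C)) (by
    rintro ⟨C, hCc, hCm⟩ ⟨D, hDc, hDm⟩ ⟨σ, hσ⟩
    apply Quot.sound
    simp only at hσ
    subst hσ
    set X := (exists_repSet hCm).choose with hXdef
    have hX : RepSet C X := (exists_repSet hCm).choose_spec
    apply xyn_trans (B := ⟨graphOf (C.image fun A => A.image σ) (X.image σ),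
      graphOf_noIsolate hDc (repSet_map σ hX)⟩)
    · exact xyn_graphOf_map σ _ _
    · exact xyn_repSwap hDc (repSet_map σ hX) (exists_repSet hDm).choose_spec _ _)

noncomputable def quotEquiv (n : ℕ) : Quot (XYnRel n) ≃ Quot (CoverIsoRel n) where
  toFun := Fmap n
  invFun := Gmap n
  left_inv := by
    apply Quot.ind
    intro A
    show Quot.mk _ (graphElt (coverElt A)) = Quot.mk _ A
    have hNI : NoIsolateY (graphOf (coverOf A.1) A.1.X) := by
      rw [graphOf_coverOf A.1]; exact A.2
    have h1 : XYnRel n (graphElt (coverElt A)) ⟨graphOf (coverOf A.1) A.1.X, hNI⟩ :=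
      xyn_repSwap (coverOf_isCover A.2) (exists_repSet (coverOf_minimal A.1)).choose_spec
        (repSet_coverOf A.1) _ _
    have h2 : (⟨graphOf (coverOf A.1) A.1.X, hNI⟩ :
        {A : XYGraph n // NoIsolateY A}) = A := Subtype.ext (graphOf_coverOf A.1)
    rw [Quot.sound h1, h2]
  right_inv := by
    apply Quot.ind
    intro C
    show Quot.mk _ (coverElt (graphElt C)) = Quot.mk _ C
    congr 1
    apply Subtype.ext
    exact coverOf_graphOf C.2.1 (exists_repSet C.2.2).choose_spec

/-- There is a bijection between isomorphism classes of XY-graphs on `n` vertices with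
no isolates in `Y` and isomorphism classes of minimal set covers of an `n`-set,
obtained by mapping each `x ∈ X` to `{x} ∪ N(x)`; under this construction, `X`
contains a universal vertex iff the cover contains a member of size `|V| − |C| + 1`. -/
theorem xy_cover_bijection (n : ℕ) :
    Nonempty (Quot (XYnRel n) ≃ Quot (CoverIsoRel n)) ∧
    (∀ A : XYGraph n, NoIsolateY A →
      let C : Finset (Finset (Fin n)) :=
        A.X.image fun x => insert x (Finset.univ.filter fun y => A.G.Adj x y)
      (IsSetCover C ∧ IsMinimalCover C) ∧
      (HasUniversalX A ↔ ∃ Y ∈ C, (Y.card : ℤ) = (n : ℤ) - C.card + 1)) := by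
  refine ⟨⟨quotEquiv n⟩, ?_⟩
  intro A hA
  have hC : (A.X.image fun x => insert x (Finset.univ.filter fun y => A.G.Adj x y))
      = coverOf A := rfl
  exact ⟨⟨coverOf_isCover hA, coverOf_minimal A⟩, universal_iff A⟩
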